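/- There exist constants $C > 0$ and $W_0 > 0$ such that for all real $W \ge W_0$ and all real $E$ with $0 < E \le W^{2/3}/2$, one has $\sum_{k \ge W + E} \frac{W^k}{k!} \le C \frac{W^{1/2}}{E} \exp\left(W - \frac{E^2}{2W}\right)$. -/

import Mathlib

open Real

lemma aux_log_lb {s : ℝ} (h0 : 0 ≤ s) (h1 : s ≤ 1/2) :
    s - s^2/2 - 2*s^3 ≤ Real.log (1 + s) := by
  have habs : |(-s)| < 1 := by rw [abs_neg, abs_of_nonneg h0]; linarith
  have h := Real.abs_log_sub_add_sum_range_le habs 2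
  have hsum : (∑ i ∈ Finset.range 2, (-s) ^ (i + 1) / (i + 1)) = -s + s^2/2 := by
    simp [Finset.sum_range_succ]; ring
  rw [hsum, show (1 : ℝ) - -s = 1 + s by ring, abs_neg, abs_of_nonneg h0] at h
  have hden : s ^ (2+1) / (1 - s) ≤ 2 * s^3 := by
    rw [div_le_iff₀ (by linarith)]
    have hx : s^3 * (2*s) ≤ s^3 * 1 := mul_le_mul_of_nonneg_left (by linarith) (pow_nonneg h0 3)
    norm_num
    nlinarith [hx]
  have h' := (abs_le.mp h).1
  linarith

lemma aux_stirling (n : ℕ) :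
    Real.sqrt π * (Real.sqrt (2 * n) * ((n : ℝ) / Real.exp 1) ^ n) ≤ (n.factorial : ℝ) := by
  rcases Nat.eq_zero_or_pos n with rfl | hn
  · simp
  · obtain ⟨k, rfl⟩ : ∃ k, n = k + 1 := ⟨n - 1, (Nat.succ_pred_eq_of_pos hn).symm⟩
    have hmono := Stirling.stirlingSeq'_antitone
    have htend : Filter.Tendsto (Stirling.stirlingSeq ∘ Nat.succ) Filter.atTop
        (nhds (Real.sqrt π)) :=
      Stirling.tendsto_stirlingSeq_sqrt_pi.comp (Filter.tendsto_add_atTop_nat 1)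
    have hle : Real.sqrt π ≤ Stirling.stirlingSeq (k + 1) := hmono.le_of_tendsto htend k
    have hpos : 0 < Real.sqrt (2 * ((k+1 : ℕ) : ℝ)) * (((k+1 : ℕ) : ℝ) / Real.exp 1) ^ (k+1) := by
      have : (0:ℝ) < ((k+1:ℕ):ℝ) := by positivity
      positivity
    rw [Stirling.stirlingSeq, le_div_iff₀ hpos] at hle
    exact hle

lemma aux_term (W : ℝ) (hW : 0 ≤ W) (m : ℕ) (hm0 : 0 < m) (hm : W ≤ m) (j : ℕ) :
    W ^ (m + j) / ((m + j).factorial : ℝ) ≤ W ^ m / (m.factorial : ℝ) * (W / m) ^ j := by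
  induction j with
  | zero => simp
  | succ j ih =>
      have hmj : (0:ℝ) < ((m + j + 1 : ℕ) : ℝ) := by positivity
      have step : W ^ (m + (j+1)) / ((m + (j+1)).factorial : ℝ)
          = W ^ (m + j) / ((m + j).factorial : ℝ) * (W / ((m + j + 1 : ℕ) : ℝ)) := by
        rw [show m + (j+1) = (m + j) + 1 by ring, pow_succ, Nat.factorial_succ]
        push_cast
        rw [div_mul_div_comm]
        ring_nf
      rw [step]
      have h1 : W / ((m + j + 1 : ℕ) : ℝ) ≤ W / m := by
        apply div_le_div_of_nonneg_left hW (by exact_mod_cast hm0)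
        exact_mod_cast Nat.le_add_right m (j+1) |>.trans_eq (by ring)
      have h3 : (0:ℝ) ≤ W / ((m + j + 1 : ℕ):ℝ) := by positivity
      calc W ^ (m + j) / ((m + j).factorial : ℝ) * (W / ((m + j + 1 : ℕ) : ℝ))
          ≤ (W ^ m / (m.factorial : ℝ) * (W / m) ^ j) * (W / ((m + j + 1:ℕ) : ℝ)) :=
            mul_le_mul_of_nonneg_right ih h3
        _ ≤ (W ^ m / (m.factorial : ℝ) * (W / m) ^ j) * (W / m) :=
            mul_le_mul_of_nonneg_left h1 (by positivity)
        _ = W ^ m / (m.factorial : ℝ) * (W / m) ^ (j+1) := by ring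

set_option maxHeartbeats 1000000


/-- Gaussian-type bound for the upper tail of the exponential series:
there are `C, W₀ > 0` such that for `W ≥ W₀` and `0 < E ≤ W^(2/3)/2`,
`∑_{k ≥ W+E} W^k/k! ≤ C (W^(1/2)/E) exp(W - E²/(2W))`. -/
theorem exp_series_upper_tail_bound :
    ∃ C > (0 : ℝ), ∃ W₀ > (0 : ℝ), ∀ W : ℝ, W₀ ≤ W → ∀ E : ℝ, 0 < E →
      E ≤ W ^ ((2 : ℝ) / 3) / 2 →
      ∑' k : ℕ, (if W + E ≤ (k : ℝ) then W ^ k / (Nat.factorial k : ℝ) else 0)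
        ≤ C * (W ^ ((1 : ℝ) / 2) / E) * Real.exp (W - E ^ 2 / (2 * W)) := by
  refine ⟨200, by norm_num, 100, by norm_num, ?_⟩
  intro W hW E hE hE2
  have hWpos : (0:ℝ) < W := by linarith
  obtain ⟨m, hmdef⟩ : ∃ m : ℕ, m = ⌈W + E⌉₊ := ⟨_, rfl⟩
  have hm1 : W + E ≤ (m:ℝ) := by rw [hmdef]; exact Nat.le_ceil _
  have hm2 : (m:ℝ) < W + E + 1 := by
    rw [hmdef]; exact Nat.ceil_lt_add_one (by positivity)
  have hcube : (W ^ ((2:ℝ)/3))^(3:ℕ) = W^(2:ℕ) := by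
    rw [← Real.rpow_natCast (W ^ ((2:ℝ)/3)) 3, ← Real.rpow_mul hWpos.le,
      ← Real.rpow_natCast W 2]
    norm_num
  have h23pos : 0 < W ^ ((2:ℝ)/3) := Real.rpow_pos_of_pos hWpos _
  have h23_ge2 : (2:ℝ) ≤ W ^ ((2:ℝ)/3) := by
    have h : (2:ℝ)^(3:ℕ) ≤ (W ^ ((2:ℝ)/3))^(3:ℕ) := by rw [hcube]; nlinarith
    exact le_of_pow_le_pow_left₀ (by norm_num) h23pos.le h
  have h23_leW2 : W ^ ((2:ℝ)/3) ≤ W/2 := by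
    have h : (W ^ ((2:ℝ)/3))^(3:ℕ) ≤ (W/2)^(3:ℕ) := by rw [hcube]; nlinarith
    exact le_of_pow_le_pow_left₀ (by norm_num) (by positivity) h
  obtain ⟨t, htdef⟩ : ∃ t : ℝ, t = (m:ℝ) - W := ⟨_, rfl⟩
  have htE : E ≤ t := by rw [htdef]; linarith
  have ht0 : 0 < t := lt_of_lt_of_le hE htE
  have htup : t ≤ W ^ ((2:ℝ)/3) := by
    have h1 : t < E + 1 := by rw [htdef]; linarith
    linarith
  have hmW : W < (m:ℝ) := by rw [htdef] at ht0; linarith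
  have hmR : (0:ℝ) < (m:ℝ) := by linarith
  have hm0 : 0 < m := by exact_mod_cast hmR
  have hmle2W : (m:ℝ) ≤ 2*W := by linarith
  have hr0 : (0:ℝ) ≤ W / (m:ℝ) := by positivity
  have hr1 : W / (m:ℝ) < 1 := (div_lt_one hmR).mpr hmW
  have hcond : ∀ k : ℕ, (W + E ≤ (k:ℝ)) ↔ m ≤ k := by
    intro k; rw [hmdef]; exact Nat.ceil_le.symm
  have hfg : ∀ k : ℕ, (if W + E ≤ (k:ℝ) then W ^ k / (Nat.factorial k : ℝ) else 0)
      ≤ (if m ≤ k then W ^ m / (m.factorial : ℝ) * (W / (m:ℝ)) ^ (k - m) else 0) := by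
    intro k
    by_cases hk : m ≤ k
    · rw [if_pos ((hcond k).mpr hk), if_pos hk]
      have h := aux_term W hWpos.le m hm0 hmW.le (k - m)
      rwa [Nat.add_sub_cancel' hk] at h
    · rw [if_neg (fun hc => hk ((hcond k).mp hc)), if_neg hk]
  have hf0 : ∀ k : ℕ,
      0 ≤ (if W + E ≤ (k:ℝ) then W ^ k / (Nat.factorial k : ℝ) else 0) := by
    intro k; split
    · positivity
    · exact le_refl 0
  have hshift : ∀ j : ℕ,
      (if m ≤ j + m then W ^ m / (m.factorial : ℝ) * (W / (m:ℝ)) ^ (j + m - m) else 0)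
        = W ^ m / (m.factorial : ℝ) * (W / (m:ℝ)) ^ j := by
    intro j
    rw [if_pos (Nat.le_add_left m j), Nat.add_sub_cancel]
  have hsum_geo : Summable (fun j : ℕ => W ^ m / (m.factorial : ℝ) * (W / (m:ℝ)) ^ j) :=
    (summable_geometric_of_lt_one hr0 hr1).mul_left _
  have hsum_g : Summable (fun k : ℕ =>
      if m ≤ k then W ^ m / (m.factorial : ℝ) * (W / (m:ℝ)) ^ (k - m) else 0) := by
    rw [← summable_nat_add_iff m]
    exact hsum_geo.congr (fun j => (hshift j).symm)
  have hsum_f : Summable (fun k : ℕ =>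
      if W + E ≤ (k:ℝ) then W ^ k / (Nat.factorial k : ℝ) else 0) :=
    hsum_g.of_nonneg_of_le hf0 hfg
  have htsum_g : ∑' k : ℕ,
      (if m ≤ k then W ^ m / (m.factorial : ℝ) * (W / (m:ℝ)) ^ (k - m) else 0)
        = W ^ m / (m.factorial : ℝ) * (1 - W / (m:ℝ))⁻¹ := by
    have h0 : ∑ i ∈ Finset.range m,
        (if m ≤ i then W ^ m / (m.factorial : ℝ) * (W / (m:ℝ)) ^ (i - m) else 0) = 0 := by
      apply Finset.sum_eq_zero
      intro i hi
      rw [if_neg (Nat.not_le.mpr (Finset.mem_range.mp hi))]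
    have hadd := Summable.sum_add_tsum_nat_add m hsum_g
    rw [h0, zero_add] at hadd
    rw [← hadd, tsum_congr hshift, tsum_mul_left, tsum_geometric_of_lt_one hr0 hr1]
  have hDpos : 0 < Real.sqrt Real.pi * (Real.sqrt (2 * (m:ℝ)) * ((m:ℝ) / Real.exp 1) ^ m) := by
    have h1 : 0 < Real.sqrt Real.pi := Real.sqrt_pos.mpr Real.pi_pos
    have h2 : 0 < Real.sqrt (2 * (m:ℝ)) := Real.sqrt_pos.mpr (by linarith)
    have h3 : 0 < ((m:ℝ) / Real.exp 1) ^ m := pow_pos (div_pos hmR (Real.exp_pos 1)) m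
    positivity
  have hbpos : 0 < Real.exp 1 * W / (m:ℝ) := by positivity
  have hexp : (Real.exp 1 * W / (m:ℝ)) ^ m ≤ Real.exp (W - E^2/(2*W) + 9/2) := by
    rw [← Real.exp_log hbpos, ← Real.exp_nat_mul, Real.exp_le_exp]
    have hlog : Real.log (Real.exp 1 * W / (m:ℝ))
        = 1 + Real.log W - Real.log (m:ℝ) := by
      rw [Real.log_div (by positivity) hmR.ne', Real.log_mul (Real.exp_ne_zero 1)
        hWpos.ne', Real.log_exp]
    have hmeq : (m:ℝ) = W * (1 + t/W) := by rw [htdef]; field_simp; ring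
    have hlogm : Real.log (m:ℝ) = Real.log W + Real.log (1 + t/W) := by
      rw [hmeq, Real.log_mul hWpos.ne' (by positivity : (0:ℝ) < 1 + t/W).ne']
    have hs2 : t/W ≤ 1/2 := by rw [div_le_iff₀ hWpos]; linarith
    have hlb := aux_log_lb (show (0:ℝ) ≤ t/W by positivity) hs2
    have hmul : (m:ℝ) * (t/W - (t/W)^2/2 - 2*(t/W)^3) ≤ (m:ℝ) * Real.log (1 + t/W) :=
      mul_le_mul_of_nonneg_left hlb hmR.le
    have hexpand : (m:ℝ) * (t/W - (t/W)^2/2 - 2*(t/W)^3)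
        = t + t^2/(2*W) - (5/2)*t^3/W^2 - 2*t^4/W^3 := by
      rw [show (m:ℝ) = W + t by rw [htdef]; ring]
      field_simp
      ring
    have ht3 : t^3 ≤ W^2 := by
      calc t^3 ≤ (W ^ ((2:ℝ)/3))^3 := pow_le_pow_left₀ ht0.le htup 3
        _ = W^2 := hcube
    have htW2 : t ≤ W/2 := le_trans htup h23_leW2
    have ht4 : t^4 ≤ W^3 := by
      calc t^4 = t^3 * t := by ring
        _ ≤ W^2 * (W/2) := mul_le_mul ht3 htW2 ht0.le (by positivity)
        _ ≤ W^3 := by nlinarith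
    have hE2t : E^2 ≤ t^2 := pow_le_pow_left₀ hE.le htE 2
    have hb1 : (5/2)*t^3/W^2 ≤ 5/2 := by
      rw [div_le_iff₀ (by positivity)]; nlinarith
    have hb2 : 2*t^4/W^3 ≤ 2 := by
      rw [div_le_iff₀ (by positivity)]; nlinarith
    have hb3 : E^2/(2*W) ≤ t^2/(2*W) := by gcongr
    rw [hlog, hlogm]
    have heq : (m:ℝ) * (1 + Real.log W - (Real.log W + Real.log (1 + t/W)))
        = (m:ℝ) - (m:ℝ) * Real.log (1 + t/W) := by ring
    rw [hexpand] at hmul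
    rw [heq]
    have hmeq2 : (m:ℝ) = W + t := by rw [htdef]; ring
    linarith
  have hsqrt2m : 0 < Real.sqrt (2 * (m:ℝ)) := Real.sqrt_pos.mpr (by linarith)
  have hsqrtpi : 0 < Real.sqrt Real.pi := Real.sqrt_pos.mpr Real.pi_pos
  have hπ1 : 1 ≤ Real.sqrt Real.pi := by
    rw [show (1:ℝ) = Real.sqrt 1 by simp]
    exact Real.sqrt_le_sqrt (by linarith [Real.pi_gt_three])
  have hfrac : (m:ℝ) / (Real.sqrt Real.pi * Real.sqrt (2 * (m:ℝ)) * E)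
      ≤ Real.sqrt W / E := by
    have h1 : (m:ℝ) ≤ Real.sqrt W * Real.sqrt (2 * (m:ℝ)) := by
      calc (m:ℝ) = Real.sqrt ((m:ℝ) * (m:ℝ)) := (Real.sqrt_mul_self hmR.le).symm
        _ ≤ Real.sqrt (W * (2 * (m:ℝ))) := Real.sqrt_le_sqrt (by nlinarith)
        _ = Real.sqrt W * Real.sqrt (2 * (m:ℝ)) := Real.sqrt_mul hWpos.le _
    have h2 : (m:ℝ) ≤ Real.sqrt Real.pi * Real.sqrt (2 * (m:ℝ)) * Real.sqrt W := by
      calc (m:ℝ) ≤ Real.sqrt W * Real.sqrt (2 * (m:ℝ)) := h1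
        _ ≤ Real.sqrt Real.pi * Real.sqrt (2 * (m:ℝ)) * Real.sqrt W := by
            nlinarith [Real.sqrt_nonneg W, Real.sqrt_nonneg (2 * (m:ℝ))]
    rw [div_le_div_iff₀ (by positivity) hE]
    nlinarith [mul_le_mul_of_nonneg_right h2 hE.le]
  calc ∑' k : ℕ, (if W + E ≤ (k:ℝ) then W ^ k / (Nat.factorial k : ℝ) else 0)
      ≤ ∑' k : ℕ, (if m ≤ k then W ^ m / (m.factorial : ℝ) * (W / (m:ℝ)) ^ (k - m) else 0) :=
        Summable.tsum_le_tsum hfg hsum_f hsum_g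
    _ = W ^ m / (m.factorial : ℝ) * (1 - W / (m:ℝ))⁻¹ := htsum_g
    _ = W ^ m / (m.factorial : ℝ) * ((m:ℝ) / t) := by
        congr 1
        rw [show (1:ℝ) - W/(m:ℝ) = t/(m:ℝ) by rw [htdef]; field_simp, inv_div]
    _ ≤ W ^ m / (m.factorial : ℝ) * ((m:ℝ) / E) := by
        apply mul_le_mul_of_nonneg_left _ (by positivity)
        exact div_le_div_of_nonneg_left hmR.le hE htE
    _ ≤ (W ^ m / (Real.sqrt Real.pi * (Real.sqrt (2 * (m:ℝ)) * ((m:ℝ) / Real.exp 1) ^ m)))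
          * ((m:ℝ) / E) := by
        apply mul_le_mul_of_nonneg_right _ (by positivity)
        exact div_le_div_of_nonneg_left (by positivity) hDpos (aux_stirling m)
    _ = (Real.exp 1 * W / (m:ℝ)) ^ m
          * ((m:ℝ) / (Real.sqrt Real.pi * Real.sqrt (2 * (m:ℝ)) * E)) := by
        rw [div_pow, div_pow]
        field_simp
        rw [mul_pow, show Real.exp 1 ^ m = Real.exp ((m:ℝ)) from by rw [← Real.exp_nat_mul, mul_one]]
        ring
    _ ≤ Real.exp (W - E^2/(2*W) + 9/2) * (Real.sqrt W / E) :=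
        mul_le_mul hexp hfrac (by positivity) (Real.exp_nonneg _)
    _ ≤ 200 * (W ^ ((1:ℝ)/2) / E) * Real.exp (W - E^2/(2*W)) := by
        rw [Real.exp_add, ← Real.sqrt_eq_rpow]
        have he : Real.exp (9/2 : ℝ) ≤ 200 := by
          have h5 : Real.exp (9/2 : ℝ) ≤ Real.exp 5 := Real.exp_le_exp.mpr (by norm_num)
          have h2 : Real.exp (5:ℝ) = Real.exp 1 ^ (5:ℕ) := by
            rw [← Real.exp_nat_mul]; norm_num
          have hlt : Real.exp 1 ^ (5:ℕ) ≤ (2.7182818286:ℝ)^(5:ℕ) :=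
            pow_le_pow_left₀ (Real.exp_nonneg 1) Real.exp_one_lt_d9.le 5
          have hn : (2.7182818286:ℝ)^(5:ℕ) ≤ 200 := by norm_num
          linarith
        calc Real.exp (W - E^2/(2*W)) * Real.exp (9/2 : ℝ) * (Real.sqrt W / E)
            = Real.exp (9/2 : ℝ) * (Real.sqrt W / E) * Real.exp (W - E^2/(2*W)) := by ring
          _ ≤ 200 * (Real.sqrt W / E) * Real.exp (W - E^2/(2*W)) := by
              have hnn : (0:ℝ) ≤ Real.sqrt W / E := by positivity
              have := mul_le_mul_of_nonneg_right
                (mul_le_mul_of_nonneg_right he hnn) (Real.exp_nonneg (W - E^2/(2*W)))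
              linarith
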